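/- Bures distance between tensor product states: Let ρ_i, σ_i ∈ S_d for i = 1, …, n, and set ρ^{(n)} = ρ_1 ⊗ … ⊗ ρ_n and σ^{(n)} = σ_1 ⊗ … ⊗ σ_n. Then 1 − exp(−Σ_{i=1}^n d_B²(ρ_i,σ_i)) ≤ d_B²(ρ^{(n)}, σ^{(n)}) ≤ Σ_{i=1}^n d_B²(ρ_i,σ_i). -/

import Mathlib

open scoped Matrix ComplexOrder
open Matrix

section Defs

variable {m : Type*}

/-- The square root of a positive semidefinite matrix (as in the older Mathlib). -/
noncomputable def Matrix.PosSemidef.sqrt {n 𝕜 : Type*} [Fintype n] [RCLike 𝕜] [DecidableEq n]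
    {A : Matrix n n 𝕜} (hA : A.PosSemidef) : Matrix n n 𝕜 :=
  (hA.1.eigenvectorUnitary : Matrix n n 𝕜) * diagonal ((↑) ∘ Real.sqrt ∘ hA.1.eigenvalues) *
    (star (hA.1.eigenvectorUnitary : Matrix n n 𝕜))

/-- The trace norm `‖X‖₁ = tr √(XᴴX)`. -/
noncomputable def traceNorm [Fintype m] [DecidableEq m] (X : Matrix m m ℂ) : ℝ :=
  ((Matrix.posSemidef_conjTranspose_mul_self X).sqrt.trace).re

/-- The trace distance `d_tr(ρ,σ) = ‖ρ - σ‖₁ / 2`. -/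
noncomputable def trDist [Fintype m] [DecidableEq m] (ρ σ : Matrix m m ℂ) : ℝ :=
  traceNorm (ρ - σ) / 2

/-- A density matrix: positive semidefinite (hence Hermitian) with unit trace. -/
def IsDensityMatrix [Fintype m] (ρ : Matrix m m ℂ) : Prop :=
  ρ.PosSemidef ∧ ρ.trace = 1

/-- Apply a superoperator, given by its matrix representation
(rows/columns indexed by matrix entry positions), to a matrix. -/
noncomputable def appS [Fintype m] (S : Matrix (m × m) (m × m) ℂ) (ρ : Matrix m m ℂ) :
    Matrix m m ℂ :=
  Matrix.of fun i j => ∑ p : m × m, S (i, j) p * ρ p.1 p.2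

/-- The Choi matrix of a superoperator. -/
def choiMatrix [Fintype m] (S : Matrix (m × m) (m × m) ℂ) : Matrix (m × m) (m × m) ℂ :=
  Matrix.of fun p q => S (p.2, q.2) (p.1, q.1)

/-- Quantum channel: completely positive (positive semidefinite Choi matrix)
and trace preserving. -/
def IsQChannelM [Fintype m] (S : Matrix (m × m) (m × m) ℂ) : Prop :=
  (choiMatrix S).PosSemidef ∧ ∀ X : Matrix m m ℂ, (appS S X).trace = X.trace

/-- `expS t L` is the superoperator `e^{tL}`. -/
noncomputable def expS [Fintype m] [DecidableEq m] (t : ℝ) (L : Matrix (m × m) (m × m) ℂ) :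
    Matrix (m × m) (m × m) ℂ :=
  NormedSpace.exp ((t : ℂ) • L)

/-- A Liouvillian: `e^{tL}` is a quantum channel for every `t ≥ 0`. -/
def IsLiouvillianM [Fintype m] [DecidableEq m] (L : Matrix (m × m) (m × m) ℂ) : Prop :=
  ∀ t : ℝ, 0 ≤ t → IsQChannelM (expS t L)

/-- `lam` is the spectral gap of the Liouvillian `L`:
`lam = inf {|Re μ| : μ eigenvalue of L, Re μ < 0}` (and such an eigenvalue exists). -/
def IsGapOf [Fintype m] [DecidableEq m] (L : Matrix (m × m) (m × m) ℂ) (lam : ℝ) : Prop :=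
  (∃ μ ∈ spectrum ℂ L, μ.re < 0) ∧
  lam = sInf {r : ℝ | ∃ μ ∈ spectrum ℂ L, μ.re < 0 ∧ r = -μ.re}

/-- `Tφ` is the peripheral evolution `T_{φ,t} = Σ_{k : Re λ_k = 0} e^{tλ_k} P_k` of the
semigroup generated by `L`: it acts as `e^{tμ}` on each generalized eigenspace of `L` with
`Re μ = 0`, and as `0` on each generalized eigenspace with `Re μ < 0`. -/
def IsPeriphEvolAt [Fintype m] (L : Matrix (m × m) (m × m) ℂ) (t : ℝ)
    (Tφ : Matrix (m × m) (m × m) ℂ) : Prop :=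
  (∀ μ : ℂ, μ.re = 0 → ∀ v ∈ Module.End.maxGenEigenspace (Matrix.mulVecLin L) μ,
      Tφ.mulVec v = Complex.exp (t * μ) • v) ∧
  (∀ μ : ℂ, μ.re < 0 → ∀ v ∈ Module.End.maxGenEigenspace (Matrix.mulVecLin L) μ,
      Tφ.mulVec v = 0)

/-- `Tφ` is the peripheral projection `T_φ = Σ_{k : |μ_k| = 1} μ_k P_k` of the channel `T`:
it acts as `μ •` on each generalized eigenspace of `T` with `|μ| = 1`, and as `0` on each
generalized eigenspace with `|μ| < 1`. -/
def IsPeriphProjM [Fintype m] (T Tφ : Matrix (m × m) (m × m) ℂ) : Prop :=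
  (∀ μ : ℂ, ‖μ‖ = 1 → ∀ v ∈ Module.End.maxGenEigenspace (Matrix.mulVecLin T) μ,
      Tφ.mulVec v = μ • v) ∧
  (∀ μ : ℂ, ‖μ‖ < 1 → ∀ v ∈ Module.End.maxGenEigenspace (Matrix.mulVecLin T) μ,
      Tφ.mulVec v = 0)

/-- The trace-norm contraction `η_tr[T] = sup_ρ d_tr(T(ρ), Tφ(ρ))` over density matrices. -/
noncomputable def etaTR [Fintype m] [DecidableEq m] (T Tφ : Matrix (m × m) (m × m) ℂ) : ℝ :=
  ⨆ ρ : {ρ : Matrix m m ℂ // IsDensityMatrix ρ}, trDist (appS T ρ.1) (appS Tφ ρ.1)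

open scoped Classical in
/-- Matrix square root of a positive semidefinite matrix (junk value `0` otherwise). -/
noncomputable def msqrt [Fintype m] [DecidableEq m] (A : Matrix m m ℂ) : Matrix m m ℂ :=
  if h : A.PosSemidef then h.sqrt else 0

/-- The fidelity `F(ρ,σ) = tr √(√ρ σ √ρ)`. -/
noncomputable def fidelity [Fintype m] [DecidableEq m] (ρ σ : Matrix m m ℂ) : ℝ :=
  ((msqrt (msqrt ρ * σ * msqrt ρ)).trace).re

/-- The Bures distance `d_B(ρ,σ) = √(1 - F(ρ,σ))`. -/
noncomputable def buresDist [Fintype m] [DecidableEq m] (ρ σ : Matrix m m ℂ) : ℝ :=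
  Real.sqrt (1 - fidelity ρ σ)

/-- The Frobenius (Hilbert-Schmidt) norm `‖X‖₂ = √(tr XᴴX)`. -/
noncomputable def frobNorm [Fintype m] (X : Matrix m m ℂ) : ℝ :=
  Real.sqrt ((Xᴴ * X).trace.re)

/-- The operator (spectral) norm `‖A‖_∞`. -/
noncomputable def specNorm [Fintype m] [DecidableEq m] (A : Matrix m m ℂ) : ℝ :=
  ‖(Matrix.toEuclideanLin A).toContinuousLinearMap‖

/-- The superoperator norm `‖S‖_{2→2} = sup {‖S(X)‖₂ : ‖X‖₂ ≤ 1}` induced by the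
Frobenius norm. -/
noncomputable def superNorm22 [Fintype m] (S : Matrix (m × m) (m × m) ℂ) : ℝ :=
  ⨆ X : {X : Matrix m m ℂ // frobNorm X ≤ 1}, frobNorm (appS S X.1)

/-- The dual (Heisenberg-picture) superoperator `S*`, satisfying
`tr[A S*(B)] = tr[S(A) B]`. -/
def dualS [Fintype m] (S : Matrix (m × m) (m × m) ℂ) : Matrix (m × m) (m × m) ℂ :=
  Matrix.of fun p q => S (q.2, q.1) (p.2, p.1)

/-- Matrix representation of the superoperator `ρ ↦ A ρ B`. -/
def sandwichS [Fintype m] (A B : Matrix m m ℂ) : Matrix (m × m) (m × m) ℂ :=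
  Matrix.of fun p q => A p.1 q.1 * B q.2 p.2

/-- The Lindblad dissipator `ρ ↦ L ρ L† − (1/2)L†L ρ − (1/2)ρ L†L` in matrix
representation. -/
noncomputable def lindbladTermS [Fintype m] [DecidableEq m] (L : Matrix m m ℂ) :
    Matrix (m × m) (m × m) ℂ :=
  sandwichS L Lᴴ - (1 / 2 : ℂ) • sandwichS (Lᴴ * L) 1 - (1 / 2 : ℂ) • sandwichS 1 (Lᴴ * L)

/-- Tensor (Kronecker) product of two superoperators. -/
def kronS {m' : Type*} [Fintype m] [Fintype m'] (S : Matrix (m × m) (m × m) ℂ)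
    (S' : Matrix (m' × m') (m' × m') ℂ) :
    Matrix ((m × m') × (m × m')) ((m × m') × (m × m')) ℂ :=
  Matrix.of fun p q =>
    S (p.1.1, p.2.1) (q.1.1, q.2.1) * S' (p.1.2, p.2.2) (q.1.2, q.2.2)

end Defs

/-- `n`-fold tensor power `S^{⊗n}` of a superoperator on `M_d`. -/
noncomputable def tensorPowS (n : ℕ) {d : ℕ} (S : Matrix (Fin d × Fin d) (Fin d × Fin d) ℂ) :
    Matrix ((Fin n → Fin d) × (Fin n → Fin d)) ((Fin n → Fin d) × (Fin n → Fin d)) ℂ :=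
  Matrix.of fun p q => ∏ i, S (p.1 i, p.2 i) (q.1 i, q.2 i)

/-- `n`-fold tensor power `ρ^{⊗n}` of a matrix. -/
noncomputable def tensorPowM (n : ℕ) {d : ℕ} (ρ : Matrix (Fin d) (Fin d) ℂ) :
    Matrix (Fin n → Fin d) (Fin n → Fin d) ℂ :=
  Matrix.of fun x y => ∏ i, ρ (x i) (y i)

/-- Tensor product `A 0 ⊗ A 1 ⊗ … ⊗ A (n-1)` of a family of matrices. -/
noncomputable def tensorFamilyM {n d : ℕ} (A : Fin n → Matrix (Fin d) (Fin d) ℂ) :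
    Matrix (Fin n → Fin d) (Fin n → Fin d) ℂ :=
  Matrix.of fun x y => ∏ i, A i (x i) (y i)

open scoped MatrixOrder in
lemma Matrix.PosSemidef.sqrt_eq_cfcSqrt {n : Type*} [Fintype n] [DecidableEq n]
    {A : Matrix n n ℂ} (hA : A.PosSemidef) : hA.sqrt = CFC.sqrt A := by
  have hA' := hA.nonneg
  rw [CFC.sqrt_eq_cfc, cfc_nnreal_eq_real _ A, hA.1.cfc_eq]
  simp only [IsHermitian.cfc, Unitary.conjStarAlgAut_apply, Matrix.PosSemidef.sqrt]
  congr 2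
  ext i j
  simp [Matrix.diagonal_apply, hA.eigenvalues_nonneg i]

open scoped MatrixOrder in
lemma Matrix.PosSemidef.posSemidef_sqrt {n : Type*} [Fintype n] [DecidableEq n]
    {A : Matrix n n ℂ} (hA : A.PosSemidef) : hA.sqrt.PosSemidef := by
  rw [hA.sqrt_eq_cfcSqrt]; exact (CFC.sqrt_nonneg A).posSemidef

open scoped MatrixOrder in
lemma Matrix.PosSemidef.sqrt_mul_self {n : Type*} [Fintype n] [DecidableEq n]
    {A : Matrix n n ℂ} (hA : A.PosSemidef) : hA.sqrt * hA.sqrt = A := by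
  rw [hA.sqrt_eq_cfcSqrt]; exact CFC.sqrt_mul_sqrt_self A hA.nonneg

open scoped MatrixOrder in
lemma Matrix.PosSemidef.eq_sqrt_of_sq_eq {n : Type*} [Fintype n] [DecidableEq n]
    {A B : Matrix n n ℂ} (hA : A.PosSemidef) (hB : B.PosSemidef) (hAB : A ^ 2 = B) :
    A = hB.sqrt := by
  rw [hB.sqrt_eq_cfcSqrt, eq_comm, CFC.sqrt_eq_iff _ _ hB.nonneg hA.nonneg, ← sq, hAB]

section AuxBures
set_option linter.unusedSectionVars false
variable {m : Type*} [Fintype m] [DecidableEq m]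

lemma psd_diag_nonneg {A : Matrix m m ℂ} (hA : A.PosSemidef) (i : m) :
    0 ≤ A i i := by
  exact hA.diag_nonneg

lemma psd_trace_re_nonneg {A : Matrix m m ℂ} (hA : A.PosSemidef) :
    0 ≤ A.trace.re := by
  rw [Matrix.trace, Complex.re_sum]
  exact Finset.sum_nonneg fun i _ => (Complex.le_def.mp (psd_diag_nonneg hA i)).1

lemma psd_trace_real {A : Matrix m m ℂ} (hA : A.PosSemidef) :
    A.trace = (A.trace.re : ℂ) := by
  rw [Matrix.trace, Complex.re_sum, Complex.ofReal_sum]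
  refine Finset.sum_congr rfl fun i _ => ?_
  have h := Complex.le_def.mp (psd_diag_nonneg hA i)
  exact Complex.ext rfl (by simpa using h.2.symm)

variable {n d : ℕ}

lemma tensorFamilyM_mul (A B : Fin n → Matrix (Fin d) (Fin d) ℂ) :
    tensorFamilyM A * tensorFamilyM B = tensorFamilyM (fun i => A i * B i) := by
  ext x z
  simp only [tensorFamilyM, Matrix.mul_apply, Matrix.of_apply]
  rw [Finset.prod_univ_sum]
  simp [Fintype.piFinset_univ, ← Finset.prod_mul_distrib]

lemma tensorFamilyM_conjTranspose (A : Fin n → Matrix (Fin d) (Fin d) ℂ) :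
    (tensorFamilyM A)ᴴ = tensorFamilyM (fun i => (A i)ᴴ) := by
  ext x y
  simp [tensorFamilyM, Matrix.conjTranspose_apply, map_prod]

lemma tensorFamilyM_trace (A : Fin n → Matrix (Fin d) (Fin d) ℂ) :
    (tensorFamilyM A).trace = ∏ i, (A i).trace := by
  simp only [Matrix.trace, Matrix.diag, tensorFamilyM, Matrix.of_apply]
  rw [Finset.prod_univ_sum]
  simp [Fintype.piFinset_univ]

lemma tensorFamilyM_posSemidef {A : Fin n → Matrix (Fin d) (Fin d) ℂ}
    (hA : ∀ i, (A i).PosSemidef) : (tensorFamilyM A).PosSemidef := by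
  have : tensorFamilyM A =
      (tensorFamilyM (fun i => (hA i).sqrt))ᴴ * tensorFamilyM (fun i => (hA i).sqrt) := by
    have key : (fun i => ((hA i).sqrt)ᴴ * (hA i).sqrt) = A := by
      funext i; rw [(hA i).posSemidef_sqrt.1.eq, (hA i).sqrt_mul_self]
    rw [tensorFamilyM_conjTranspose, tensorFamilyM_mul, key]
  rw [this]
  exact Matrix.posSemidef_conjTranspose_mul_self _
variable {m : Type*} [Fintype m] [DecidableEq m]

lemma msqrt_eq {A : Matrix m m ℂ} (h : A.PosSemidef) : msqrt A = h.sqrt := dif_pos h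

lemma msqrt_posSemidef {A : Matrix m m ℂ} (h : A.PosSemidef) : (msqrt A).PosSemidef := by
  rw [msqrt_eq h]; exact h.posSemidef_sqrt

lemma msqrt_mul_self {A : Matrix m m ℂ} (h : A.PosSemidef) : msqrt A * msqrt A = A := by
  rw [msqrt_eq h]; exact h.sqrt_mul_self

lemma msqrt_hermitian {A : Matrix m m ℂ} (h : A.PosSemidef) : (msqrt A)ᴴ = msqrt A :=
  (msqrt_posSemidef h).1.eq

lemma inner_psd_posSemidef {A B : Matrix m m ℂ} (hA : A.PosSemidef) (hB : B.PosSemidef) :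
    (msqrt A * B * msqrt A).PosSemidef := by
  have := hB.mul_mul_conjTranspose_same (msqrt A)
  rwa [msqrt_hermitian hA] at this

variable {n d : ℕ}

lemma msqrt_tensorFamilyM {A : Fin n → Matrix (Fin d) (Fin d) ℂ}
    (hA : ∀ i, (A i).PosSemidef) :
    msqrt (tensorFamilyM A) = tensorFamilyM (fun i => msqrt (A i)) := by
  have hpsd : (tensorFamilyM (fun i => msqrt (A i))).PosSemidef :=
    tensorFamilyM_posSemidef (fun i => msqrt_posSemidef (hA i))
  have hsq : (tensorFamilyM (fun i => msqrt (A i))) ^ 2 = tensorFamilyM A := by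
    have key : (fun i => msqrt (A i) * msqrt (A i)) = A := funext fun i => msqrt_mul_self (hA i)
    rw [pow_two, tensorFamilyM_mul, key]
  rw [msqrt_eq (tensorFamilyM_posSemidef hA)]
  exact (hpsd.eq_sqrt_of_sq_eq _ hsq).symm

lemma fidelity_tensorFamilyM {A B : Fin n → Matrix (Fin d) (Fin d) ℂ}
    (hA : ∀ i, (A i).PosSemidef) (hB : ∀ i, (B i).PosSemidef) :
    fidelity (tensorFamilyM A) (tensorFamilyM B) = ∏ i, fidelity (A i) (B i) := by
  unfold fidelity
  rw [msqrt_tensorFamilyM hA, tensorFamilyM_mul, tensorFamilyM_mul]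
  have hinner : ∀ i, (msqrt (A i) * B i * msqrt (A i)).PosSemidef :=
    fun i => inner_psd_posSemidef (hA i) (hB i)
  rw [msqrt_tensorFamilyM (fun i => hinner i), tensorFamilyM_trace]
  have : ∀ i, (msqrt (msqrt (A i) * B i * msqrt (A i))).trace =
      (((msqrt (msqrt (A i) * B i * msqrt (A i))).trace.re : ℝ) : ℂ) :=
    fun i => psd_trace_real (msqrt_posSemidef (hinner i))
  rw [Finset.prod_congr rfl (fun i _ => this i), ← Complex.ofReal_prod, Complex.ofReal_re]

lemma fidelity_nonneg {A B : Matrix m m ℂ} (hA : A.PosSemidef) (hB : B.PosSemidef) :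
    0 ≤ fidelity A B :=
  psd_trace_re_nonneg (msqrt_posSemidef (inner_psd_posSemidef hA hB))

lemma retr_amgm (B C : Matrix m m ℂ) :
    ((Bᴴ * C).trace).re ≤ ((Bᴴ * B).trace).re / 2 + ((Cᴴ * C).trace).re / 2 := by
  have expand : ∀ X Y : Matrix m m ℂ, ((Xᴴ * Y).trace).re =
      ∑ j, ∑ k, ((starRingEnd ℂ) (X k j) * Y k j).re := by
    intro X Y
    rw [Matrix.trace, Complex.re_sum]
    refine Finset.sum_congr rfl fun j _ => ?_
    rw [Matrix.diag_apply, Matrix.mul_apply, Complex.re_sum]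
    refine Finset.sum_congr rfl fun k _ => ?_
    rw [Matrix.conjTranspose_apply]
    rfl
  rw [expand, expand, expand]
  have step : ∀ j k : m, ((starRingEnd ℂ) (B k j) * C k j).re ≤
      ((starRingEnd ℂ) (B k j) * B k j).re / 2 + ((starRingEnd ℂ) (C k j) * C k j).re / 2 := by
    intro j k
    have h1 : ((starRingEnd ℂ) (B k j) * C k j).re ≤
        ‖B k j‖ * ‖C k j‖ := by
      refine (Complex.re_le_norm _).trans ?_
      rw [norm_mul, Complex.norm_conj]
    have h2 : ((starRingEnd ℂ) (B k j) * B k j).re = ‖B k j‖ ^ 2 := by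
      rw [mul_comm, Complex.mul_conj]
      simp [Complex.sq_norm]
    have h3 : ((starRingEnd ℂ) (C k j) * C k j).re = ‖C k j‖ ^ 2 := by
      rw [mul_comm, Complex.mul_conj]
      simp [Complex.sq_norm]
    rw [h2, h3]
    nlinarith [sq_nonneg (‖B k j‖ - ‖C k j‖)]
  calc ∑ j, ∑ k, ((starRingEnd ℂ) (B k j) * C k j).re
      ≤ ∑ j, ∑ k, (((starRingEnd ℂ) (B k j) * B k j).re / 2 +
        ((starRingEnd ℂ) (C k j) * C k j).re / 2) :=
        Finset.sum_le_sum fun j _ => Finset.sum_le_sum fun k _ => step j k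
    _ = (∑ j, ∑ k, ((starRingEnd ℂ) (B k j) * B k j).re) / 2 +
        (∑ j, ∑ k, ((starRingEnd ℂ) (C k j) * C k j).re) / 2 := by
        simp only [← Finset.sum_div, Finset.sum_add_distrib]

lemma fidelity_le_one {ρ σ : Matrix m m ℂ} (hρ : ρ.PosSemidef) (hσ : σ.PosSemidef)
    (tρ : ρ.trace = 1) (tσ : σ.trace = 1) : fidelity ρ σ ≤ 1 := by
  obtain ⟨R, hRH, hRR, hfid0⟩ : ∃ R : Matrix m m ℂ, Rᴴ = R ∧ R * R = ρ ∧
      fidelity ρ σ = ((msqrt (R * σ * R)).trace).re :=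
    ⟨msqrt ρ, msqrt_hermitian hρ, msqrt_mul_self hρ, rfl⟩
  obtain ⟨S, hSH, hSS⟩ : ∃ S : Matrix m m ℂ, Sᴴ = S ∧ S * S = σ :=
    ⟨msqrt σ, msqrt_hermitian hσ, msqrt_mul_self hσ⟩
  have hMfact : (S * R)ᴴ * (S * R) = R * σ * R := by
    rw [Matrix.conjTranspose_mul, hSH, hRH, ← hSS]
    noncomm_ring
  have hM : (R * σ * R).PosSemidef := hMfact ▸ Matrix.posSemidef_conjTranspose_mul_self (S * R)
  set lam := hM.1.eigenvalues with hlam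
  have hlam_nn : ∀ i, 0 ≤ lam i := hM.eigenvalues_nonneg
  set V := (hM.1.eigenvectorUnitary : Matrix m m ℂ) with hV
  have hstar : star V = Vᴴ := rfl
  have hVV : Vᴴ * V = 1 := by
    rw [← hstar]; exact (Matrix.mem_unitaryGroup_iff').mp hM.1.eigenvectorUnitary.2
  have hVV' : V * Vᴴ = 1 := by
    rw [← hstar]; exact (Matrix.mem_unitaryGroup_iff).mp hM.1.eigenvectorUnitary.2
  have hdiagM : Vᴴ * (R * σ * R) * V = Matrix.diagonal (Complex.ofReal ∘ lam) := by
    rw [← hstar]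
    have := hM.1.conjStarAlgAut_star_eigenvectorUnitary
    simp only [Unitary.conjStarAlgAut_star_apply, Unitary.coe_star] at this
    exact this
  -- fidelity = ∑ √λᵢ
  have hfid : fidelity ρ σ = ∑ i, Real.sqrt (lam i) := by
    rw [hfid0, msqrt_eq hM]
    have : hM.sqrt = V * Matrix.diagonal ((↑) ∘ Real.sqrt ∘ lam) * star V := rfl
    rw [this, Matrix.trace_mul_cycle, hstar, hVV, Matrix.one_mul, Matrix.trace_diagonal]
    simp [Complex.re_sum]
  set dp : m → ℂ := fun i => ((if lam i = 0 then 0 else (Real.sqrt (lam i))⁻¹ : ℝ) : ℂ) with hdp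
  set efun : m → ℂ := fun i => if lam i = 0 then (0 : ℂ) else 1 with hefun
  set U := S * R * V * Matrix.diagonal dp with hU
  have hdpstar : star dp = dp := by
    funext i
    simp [hdp, Pi.star_apply, Complex.star_def, Complex.conj_ofReal]
  have hUconj : Uᴴ = Matrix.diagonal dp * (Vᴴ * (S * R)ᴴ) := by
    rw [hU, Matrix.conjTranspose_mul, Matrix.conjTranspose_mul,
      Matrix.diagonal_conjTranspose, hdpstar]
  have hUAV : Uᴴ * (S * R * V) = Matrix.diagonal (fun i => (Real.sqrt (lam i) : ℂ)) := by
    rw [hUconj]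
    have key : Matrix.diagonal dp * (Vᴴ * (S * R)ᴴ) * (S * R * V)
        = Matrix.diagonal dp * (Vᴴ * ((S * R)ᴴ * (S * R)) * V) := by noncomm_ring
    rw [key, hMfact, hdiagM, Matrix.diagonal_mul_diagonal]
    refine congrArg Matrix.diagonal (funext fun i => ?_)
    by_cases h : lam i = 0
    · simp [hdp, h]
    · have hpos : 0 < lam i := lt_of_le_of_ne (hlam_nn i) (Ne.symm h)
      simp only [hdp, if_neg h, Function.comp_apply]
      norm_cast
      rw [inv_mul_eq_div, div_eq_iff (by positivity), Real.mul_self_sqrt (hlam_nn i)]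
  have hUU : Uᴴ * U = Matrix.diagonal efun := by
    nth_rewrite 2 [hU]
    have assoc1 : Uᴴ * (S * R * V * Matrix.diagonal dp)
        = (Uᴴ * (S * R * V)) * Matrix.diagonal dp := by noncomm_ring
    rw [assoc1, hUAV, Matrix.diagonal_mul_diagonal]
    refine congrArg Matrix.diagonal (funext fun i => ?_)
    by_cases h : lam i = 0
    · simp [hdp, hefun, h]
    · have hpos : 0 < lam i := lt_of_le_of_ne (hlam_nn i) (Ne.symm h)
      have hne : Real.sqrt (lam i) ≠ 0 := by positivity
      simp only [hdp, hefun, if_neg h]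
      norm_cast
      rw [mul_inv_cancel₀ hne]
  have hUE : U * Matrix.diagonal efun = U := by
    have assoc2 : U * Matrix.diagonal efun
        = S * R * V * (Matrix.diagonal dp * Matrix.diagonal efun) := by
      rw [hU]; noncomm_ring
    rw [assoc2, Matrix.diagonal_mul_diagonal, hU]
    refine congrArg _ (congrArg Matrix.diagonal (funext fun i => ?_))
    by_cases h : lam i = 0 <;> simp [hdp, hefun, h]
  have hP2 : (U * Uᴴ) * (U * Uᴴ) = U * Uᴴ := by
    have : (U * Uᴴ) * (U * Uᴴ) = U * (Uᴴ * U) * Uᴴ := by noncomm_ring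
    rw [this, hUU, hUE]
  have hPH : (U * Uᴴ)ᴴ = U * Uᴴ := by
    rw [Matrix.conjTranspose_mul, Matrix.conjTranspose_conjTranspose]
  have hQpsd : (1 - U * Uᴴ).PosSemidef := by
    have hQQ : (1 - U * Uᴴ)ᴴ * (1 - U * Uᴴ) = 1 - U * Uᴴ := by
      rw [Matrix.conjTranspose_sub, Matrix.conjTranspose_one, hPH, Matrix.sub_mul,
        Matrix.one_mul, Matrix.mul_sub, Matrix.mul_one, hP2]
      abel
    exact hQQ ▸ Matrix.posSemidef_conjTranspose_mul_self _
  -- the three trace facts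
  have tr1 : ((Uᴴ * (S * R * V)).trace).re = ∑ i, Real.sqrt (lam i) := by
    rw [hUAV, Matrix.trace_diagonal]
    simp [Complex.re_sum]
  have hsplit : Uᴴ * (S * R * V) = (S * U)ᴴ * (R * V) := by
    rw [Matrix.conjTranspose_mul S U, hSH]
    noncomm_ring
  have tr2 : (((R * V)ᴴ * (R * V)).trace).re = 1 := by
    have e1 : (R * V)ᴴ * (R * V) = Vᴴ * ρ * V := by
      rw [Matrix.conjTranspose_mul, hRH, ← hRR]
      noncomm_ring
    rw [e1, Matrix.trace_mul_cycle, hVV', Matrix.one_mul, tρ]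
    simp
  have tr3 : (((S * U)ᴴ * (S * U)).trace).re ≤ 1 := by
    have e1 : (S * U)ᴴ * (S * U) = Uᴴ * σ * U := by
      rw [Matrix.conjTranspose_mul, hSH, ← hSS]
      noncomm_ring
    have e2 : (Uᴴ * σ * U).trace = (U * Uᴴ * σ).trace := by
      rw [Matrix.trace_mul_cycle]
    have decomp : U * Uᴴ * σ = σ - (1 - U * Uᴴ) * σ := by noncomm_ring
    have e3 : ((1 - U * Uᴴ) * σ).trace = (S * (1 - U * Uᴴ) * Sᴴ).trace := by
      rw [hSH, ← hSS, ← Matrix.mul_assoc, Matrix.trace_mul_cycle]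
    have e4 : 0 ≤ ((S * (1 - U * Uᴴ) * Sᴴ).trace).re :=
      psd_trace_re_nonneg (hQpsd.mul_mul_conjTranspose_same S)
    rw [e1, e2, decomp, Matrix.trace_sub, tσ]
    rw [Complex.sub_re, e3] at *
    simp only [Complex.one_re]
    linarith
  have amgm := retr_amgm (S * U) (R * V)
  rw [← hsplit, tr1, tr2] at amgm
  rw [hfid]
  linarith [amgm, tr3]

lemma one_sub_sum_le_prod' {ι : Type*} (s : Finset ι) (f : ι → ℝ)
    (h0 : ∀ i ∈ s, 0 ≤ f i) (h1 : ∀ i ∈ s, f i ≤ 1) :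
    1 - ∑ i ∈ s, (1 - f i) ≤ ∏ i ∈ s, f i := by
  induction s using Finset.cons_induction with
  | empty => simp
  | cons a s ha ih =>
    rw [Finset.prod_cons, Finset.sum_cons]
    have h0' : ∀ i ∈ s, 0 ≤ f i := fun i hi => h0 i (Finset.mem_cons_of_mem hi)
    have h1' : ∀ i ∈ s, f i ≤ 1 := fun i hi => h1 i (Finset.mem_cons_of_mem hi)
    have ihs := ih h0' h1'
    have hsum : 0 ≤ ∑ i ∈ s, (1 - f i) :=
      Finset.sum_nonneg fun i hi => by linarith [h1' i hi]
    have hfa0 := h0 a (Finset.mem_cons_self a s)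
    have hfa1 := h1 a (Finset.mem_cons_self a s)
    nlinarith [mul_le_mul_of_nonneg_left ihs hfa0]

lemma prod_le_exp_sum {ι : Type*} (s : Finset ι) (f : ι → ℝ) (h0 : ∀ i ∈ s, 0 ≤ f i) :
    ∏ i ∈ s, f i ≤ Real.exp (-∑ i ∈ s, (1 - f i)) := by
  have : Real.exp (-∑ i ∈ s, (1 - f i)) = ∏ i ∈ s, Real.exp (-(1 - f i)) := by
    rw [← Real.exp_sum, Finset.sum_neg_distrib]
  rw [this]
  refine Finset.prod_le_prod h0 fun i _ => ?_
  have := Real.add_one_le_exp (f i - 1)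
  rw [show -(1 - f i) = f i - 1 by ring]
  linarith

end AuxBures

/-- **Bures distance between tensor product states.** -/
theorem bures_tensor_product_bounds {d n : ℕ}
    (ρ σ : Fin n → Matrix (Fin d) (Fin d) ℂ)
    (hρ : ∀ i, IsDensityMatrix (ρ i)) (hσ : ∀ i, IsDensityMatrix (σ i)) :
    1 - Real.exp (-∑ i, buresDist (ρ i) (σ i) ^ 2) ≤
        buresDist (tensorFamilyM ρ) (tensorFamilyM σ) ^ 2 ∧
    buresDist (tensorFamilyM ρ) (tensorFamilyM σ) ^ 2 ≤ ∑ i, buresDist (ρ i) (σ i) ^ 2 := by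
  have hF0 : ∀ i, 0 ≤ fidelity (ρ i) (σ i) := fun i => fidelity_nonneg (hρ i).1 (hσ i).1
  have hF1 : ∀ i, fidelity (ρ i) (σ i) ≤ 1 := fun i =>
    fidelity_le_one (hρ i).1 (hσ i).1 (hρ i).2 (hσ i).2
  have hFt : fidelity (tensorFamilyM ρ) (tensorFamilyM σ) = ∏ i, fidelity (ρ i) (σ i) :=
    fidelity_tensorFamilyM (fun i => (hρ i).1) (fun i => (hσ i).1)
  have hprod0 : 0 ≤ ∏ i, fidelity (ρ i) (σ i) :=
    Finset.prod_nonneg fun i _ => hF0 i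
  have hprod1 : ∏ i, fidelity (ρ i) (σ i) ≤ 1 :=
    Finset.prod_le_one (fun i _ => hF0 i) (fun i _ => hF1 i)
  have hBt : buresDist (tensorFamilyM ρ) (tensorFamilyM σ) ^ 2
      = 1 - ∏ i, fidelity (ρ i) (σ i) := by
    rw [buresDist, Real.sq_sqrt (by rw [hFt]; linarith), hFt]
  have hBi : ∀ i, buresDist (ρ i) (σ i) ^ 2 = 1 - fidelity (ρ i) (σ i) := fun i => by
    rw [buresDist, Real.sq_sqrt (by linarith [hF1 i])]
  have hsum : ∑ i, buresDist (ρ i) (σ i) ^ 2 = ∑ i, (1 - fidelity (ρ i) (σ i)) :=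
    Finset.sum_congr rfl fun i _ => hBi i
  rw [hBt, hsum]
  constructor
  · have := prod_le_exp_sum Finset.univ (fun i => fidelity (ρ i) (σ i)) (fun i _ => hF0 i)
    linarith
  · have := one_sub_sum_le_prod' Finset.univ (fun i => fidelity (ρ i) (σ i))
      (fun i _ => hF0 i) (fun i _ => hF1 i)
    linarith
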